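/- For all integers 0 ≤ r < n−1, it holds that ∑_{i=1}^n (q_i−1)²·s_r([n]∖{i}) = n(q̂_a−1)·s_{r+1} − (r+2)·s_{r+2}, where q̂_a = (1/n)∑_{i=1}^n q_i. -/

import Mathlib

open Finset

/-- The Hamming weight of `x ∈ Q = ∏ i, ℤ/q_iℤ`: the number of coordinates `i`
with `x i ≠ 0`. -/
def mwt {n : ℕ} {q : Fin n → ℕ} (x : ∀ i, ZMod (q i)) : ℕ :=
  (Finset.univ.filter (fun i => x i ≠ 0)).card

/-- `sph q r` is `s_r`, the number of `x ∈ Q` with `wt(x) = r`. -/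
noncomputable def sph {n : ℕ} (q : Fin n → ℕ) (r : ℕ) : ℕ :=
  Nat.card {x : ∀ i, ZMod (q i) // mwt x = r}

/-- `sphI q r I` is `s_r(I)`, the number of `x ∈ Q` with `wt(x) = r` and
`supp(x) ⊆ I`. -/
noncomputable def sphI {n : ℕ} (q : Fin n → ℕ) (r : ℕ) (I : Finset (Fin n)) : ℕ :=
  Nat.card {x : ∀ i, ZMod (q i) // mwt x = r ∧ ∀ i, x i ≠ 0 → i ∈ I}

lemma sphI_eq {n : ℕ} (q : Fin n → ℕ) (hq : ∀ i, 2 ≤ q i) (r : ℕ) (I : Finset (Fin n)) :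
    sphI q r I = ∑ S ∈ I.powersetCard r, ∏ i ∈ S, (q i - 1) := by
  haveI : ∀ i, NeZero (q i) := fun i => ⟨by have := hq i; omega⟩
  classical
  rw [sphI, Nat.card_eq_fintype_card, Fintype.card_subtype]
  have key : (univ.filter (fun x : ∀ i, ZMod (q i) => mwt x = r ∧ ∀ i, x i ≠ 0 → i ∈ I))
      = (I.powersetCard r).biUnion (fun S => Fintype.piFinset
          (fun i => if i ∈ S then univ.filter (fun a : ZMod (q i) => a ≠ 0) else {0})) := by
    ext x
    simp only [mem_filter, mem_univ, true_and, mem_biUnion, Fintype.mem_piFinset,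
      mem_powersetCard]
    constructor
    · rintro ⟨hw, hs⟩
      refine ⟨univ.filter (fun i => x i ≠ 0), ⟨fun i hi => hs i (by simpa using hi), hw⟩, ?_⟩
      intro i
      by_cases h : x i = 0 <;> simp [h]
    · rintro ⟨S, ⟨hSI, hSc⟩, hx⟩
      have hsupp : univ.filter (fun i => x i ≠ 0) = S := by
        ext i
        have := hx i
        by_cases h : i ∈ S <;> simp_all
      constructor
      · rw [mwt, hsupp, hSc]
      · intro i hi
        exact hSI (by rw [← hsupp]; simpa using hi)
  rw [key, Finset.card_biUnion]
  · refine Finset.sum_congr rfl fun S hS => ?_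
    rw [Fintype.card_piFinset]
    rw [mem_powersetCard] at hS
    rw [← Finset.prod_filter_mul_prod_filter_not univ (· ∈ S)]
    have h1 : ∏ i ∈ univ.filter (· ∈ S), ((if i ∈ S then univ.filter
        (fun a : ZMod (q i) => a ≠ 0) else {0}).card)
        = ∏ i ∈ S, (q i - 1) := by
      rw [Finset.filter_mem_eq_inter, Finset.univ_inter]
      refine Finset.prod_congr rfl fun i hi => ?_
      rw [if_pos hi, Finset.filter_ne', Finset.card_erase_of_mem (mem_univ _),
        Finset.card_univ, ZMod.card]
    have h2 : ∏ i ∈ univ.filter (· ∉ S), ((if i ∈ S then univ.filter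
        (fun a : ZMod (q i) => a ≠ 0) else {0}).card) = 1 := by
      refine Finset.prod_eq_one fun i hi => ?_
      rw [mem_filter] at hi
      rw [if_neg hi.2, Finset.card_singleton]
    rw [h1, h2, mul_one]
  · intro S hS T hT hST
    simp only [Function.onFun]
    rw [Finset.disjoint_left]
    intro x hxS hxT
    apply hST
    rw [Fintype.mem_piFinset] at hxS hxT
    ext i
    have h1 := hxS i
    have h2 := hxT i
    by_cases h : i ∈ S <;> by_cases h' : i ∈ T <;> simp_all

lemma sph_eq {n : ℕ} (q : Fin n → ℕ) (hq : ∀ i, 2 ≤ q i) (r : ℕ) :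
    sph q r = ∑ S ∈ (univ : Finset (Fin n)).powersetCard r, ∏ i ∈ S, (q i - 1) := by
  rw [← sphI_eq q hq r univ, sph, sphI]
  exact Nat.card_congr (Equiv.subtypeEquivRight (by simp))

/-- Reindexing: summing over `(T, i ∈ T)` with `|T| = k+1` equals summing over
`(i, S ⊆ univ \ {i})` with `|S| = k`. -/
lemma reindex {n : ℕ} (k : ℕ) (f : Fin n → Finset (Fin n) → ℝ) :
    ∑ T ∈ (univ : Finset (Fin n)).powersetCard (k + 1), ∑ i ∈ T, f i (T.erase i)
      = ∑ i : Fin n, ∑ S ∈ ((univ : Finset (Fin n)).erase i).powersetCard k, f i S := by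
  classical
  rw [Finset.sum_sigma', Finset.sum_sigma']
  refine Finset.sum_nbij' (fun p => ⟨p.2, p.1.erase p.2⟩) (fun p => ⟨insert p.1 p.2, p.1⟩)
    ?_ ?_ ?_ ?_ ?_
  · rintro ⟨T, i⟩ hp
    simp only [mem_sigma, mem_powersetCard] at hp ⊢
    obtain ⟨⟨-, hTc⟩, hiT⟩ := hp
    refine ⟨mem_univ _, ?_, ?_⟩
    · intro j hj
      rw [Finset.mem_erase] at hj ⊢
      exact ⟨hj.1, mem_univ _⟩
    · rw [Finset.card_erase_of_mem hiT, hTc]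
      omega
  · rintro ⟨i, S⟩ hp
    simp only [mem_sigma, mem_powersetCard] at hp ⊢
    obtain ⟨-, hSsub, hSc⟩ := hp
    have hiS : i ∉ S := fun h => by simpa using hSsub h
    refine ⟨⟨fun j _ => mem_univ j, ?_⟩, mem_insert_self i S⟩
    rw [Finset.card_insert_of_notMem hiS, hSc]
  · rintro ⟨T, i⟩ hp
    simp only [mem_sigma, mem_powersetCard] at hp
    simp [Finset.insert_erase hp.2]
  · rintro ⟨i, S⟩ hp
    simp only [mem_sigma, mem_powersetCard] at hp
    have hiS : i ∉ S := fun h => by simpa using hp.2.1 h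
    simp [Finset.erase_insert hiS]
  · rintro ⟨T, i⟩ hp
    rfl

/-- For all `0 ≤ r < n - 1`,
`∑_{i ∈ [n]} (q_i - 1)² s_r([n] \ {i}) = n (q̂_a - 1) s_{r+1} - (r+2) s_{r+2}`,
where `q̂_a = (1/n) ∑ q_i`. -/
theorem stmt2 (n : ℕ) (hn : 1 ≤ n) (q : Fin n → ℕ) (hq : ∀ i, 2 ≤ q i)
    (r : ℕ) (hr : r < n - 1) :
    ∑ i : Fin n, ((q i : ℝ) - 1) ^ 2 * sphI q r (Finset.univ.erase i)
      = (n : ℝ) * ((∑ i : Fin n, (q i : ℝ)) / n - 1) * sph q (r + 1)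
        - ((r : ℝ) + 2) * sph q (r + 2) := by
  classical
  set c : Fin n → ℝ := fun i => (q i : ℝ) - 1 with hc
  have castprod : ∀ S : Finset (Fin n), ((∏ i ∈ S, (q i - 1) : ℕ) : ℝ) = ∏ i ∈ S, c i := by
    intro S
    rw [Nat.cast_prod]
    refine Finset.prod_congr rfl fun i _ => ?_
    rw [Nat.cast_sub (by have := hq i; omega)]
    simp [hc]
  have hsphI : ∀ (r' : ℕ) (I : Finset (Fin n)),
      (sphI q r' I : ℝ) = ∑ S ∈ I.powersetCard r', ∏ i ∈ S, c i := by
    intro r' I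
    rw [sphI_eq q hq r' I, Nat.cast_sum]
    exact Finset.sum_congr rfl fun S _ => castprod S
  have hsph : ∀ r' : ℕ,
      (sph q r' : ℝ) = ∑ S ∈ (univ : Finset (Fin n)).powersetCard r', ∏ i ∈ S, c i := by
    intro r'
    rw [sph_eq q hq r', Nat.cast_sum]
    exact Finset.sum_congr rfl fun S _ => castprod S
  have hn0 : (n : ℝ) ≠ 0 := by positivity
  have hmean : (n : ℝ) * ((∑ i : Fin n, (q i : ℝ)) / n - 1) = ∑ i : Fin n, c i := by
    rw [mul_sub, mul_div_cancel₀ _ hn0, mul_one, hc, Finset.sum_sub_distrib]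
    simp
  rw [hmean, hsph, hsph]
  simp_rw [hsphI]
  -- the key combinatorial identity
  have key1 : (∑ i : Fin n, c i) * ∑ T ∈ (univ : Finset (Fin n)).powersetCard (r + 1),
      ∏ j ∈ T, c j
      = (∑ i : Fin n, c i ^ 2 * ∑ S ∈ ((univ : Finset (Fin n)).erase i).powersetCard r,
          ∏ j ∈ S, c j)
        + ((r : ℝ) + 2) * ∑ U ∈ (univ : Finset (Fin n)).powersetCard (r + 2),
            ∏ j ∈ U, c j := by
    have step1 : (∑ i : Fin n, c i) * ∑ T ∈ (univ : Finset (Fin n)).powersetCard (r + 1),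
        ∏ j ∈ T, c j
        = ∑ T ∈ (univ : Finset (Fin n)).powersetCard (r + 1),
            (∑ i ∈ T, c i * ∏ j ∈ T, c j + ∑ i ∈ (univ : Finset (Fin n)) \ T,
              c i * ∏ j ∈ T, c j) := by
      rw [Finset.mul_sum]
      refine Finset.sum_congr rfl fun T hT => ?_
      rw [Finset.sum_mul, ← Finset.sum_sdiff (Finset.subset_univ T), add_comm]
    rw [step1, Finset.sum_add_distrib]
    congr 1
    · -- part A
      have hA : ∀ T ∈ (univ : Finset (Fin n)).powersetCard (r + 1),
          ∑ i ∈ T, c i * ∏ j ∈ T, c j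
            = ∑ i ∈ T, c i ^ 2 * ∏ j ∈ T.erase i, c j := by
        intro T hT
        refine Finset.sum_congr rfl fun i hi => ?_
        rw [← Finset.mul_prod_erase T c hi]
        ring
      rw [Finset.sum_congr rfl hA, reindex r (fun i S => c i ^ 2 * ∏ j ∈ S, c j)]
      refine Finset.sum_congr rfl fun i _ => ?_
      rw [Finset.mul_sum]
    · -- part B
      have swap : ∑ T ∈ (univ : Finset (Fin n)).powersetCard (r + 1),
          ∑ i ∈ (univ : Finset (Fin n)) \ T, c i * ∏ j ∈ T, c j
          = ∑ i : Fin n, ∑ T ∈ ((univ : Finset (Fin n)).erase i).powersetCard (r + 1),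
              c i * ∏ j ∈ T, c j := by
        rw [Finset.sum_comm' (s' := fun i => ((univ : Finset (Fin n)).erase i).powersetCard
          (r + 1)) (t' := (univ : Finset (Fin n)))]
        intro T i
        simp only [mem_powersetCard, Finset.mem_sdiff, mem_univ, true_and, and_true,
          Finset.subset_erase, Finset.subset_univ, Finset.mem_erase]
        tauto
      rw [swap, ← reindex (r + 1) (fun i S => c i * ∏ j ∈ S, c j)]
      have hU : ∀ U ∈ (univ : Finset (Fin n)).powersetCard (r + 2),
          ∑ i ∈ U, c i * ∏ j ∈ U.erase i, c j = ((r : ℝ) + 2) * ∏ j ∈ U, c j := by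
        intro U hU
        rw [mem_powersetCard] at hU
        calc ∑ i ∈ U, c i * ∏ j ∈ U.erase i, c j
            = ∑ i ∈ U, ∏ j ∈ U, c j := by
              refine Finset.sum_congr rfl fun i hi => ?_
              rw [Finset.mul_prod_erase U c hi]
          _ = ((r : ℝ) + 2) * ∏ j ∈ U, c j := by
              rw [Finset.sum_const, hU.2, nsmul_eq_mul]
              push_cast
              ring
      rw [Finset.sum_congr rfl hU, ← Finset.mul_sum]
  linarith [key1]
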